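/- With notation as for varieties of lines modeled as tripartite graphs, and with μ_{ij0} = 1 if edge a_i b_j is present else 0 (and similarly μ_{i0k}, μ_{0jk}), X fails the Hyp₄(⋆)-property if and only if there exist indices such that one of the following three configurations occurs: (1) μ_{a₁b₁c₁} = μ_{a₂b₁c₁} = 1, μ_{a₁b₁0} = 1, μ_{a₂b₁0} = 0; (2) μ_{a₁b₁c₁} = μ_{a₁b₁c₂} = 1, μ_{a₁0c₁} = 1, μ_{a₁0c₂} = 0; (3) μ_{a₁b₁c₁} = μ_{a₁b₂c₁} = 1, μ_{0b₁c₁} = 1, μ_{0b₂c₁} = 0. -/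

import Mathlib

/-- The `Hyp_n(⋆)`-property for a graph `G` modeling a variety of lines. -/
def HypStar {V : Type*} (G : SimpleGraph V) (n : ℕ) : Prop :=
  ∀ H : ZMod n → V, Function.Injective H →
    (∀ i j : ZMod n, j ≠ i - 1 → j ≠ i → j ≠ i + 1 → G.Adj (H i) (H j)) →
    ∃ u : ZMod n, G.Adj (H u) (H (u + 1))

/-- The tripartite graph `G_X` of a variety of lines `X`. -/
def lineGraph {d₁ d₂ d₃ : ℕ} (Eab : Fin d₁ → Fin d₂ → Bool) (Eac : Fin d₁ → Fin d₃ → Bool)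
    (Ebc : Fin d₂ → Fin d₃ → Bool) : SimpleGraph (Fin d₁ ⊕ Fin d₂ ⊕ Fin d₃) :=
  SimpleGraph.fromRel fun x y =>
    match x, y with
    | Sum.inl i, Sum.inr (Sum.inl j) => Eab i j = true
    | Sum.inl i, Sum.inr (Sum.inr k) => Eac i k = true
    | Sum.inr (Sum.inl j), Sum.inr (Sum.inr k) => Ebc j k = true
    | _, _ => False

/-- The multiplicity `μ_{ijk}` of the point `P_{ijk}`. -/
def mu {d₁ d₂ d₃ : ℕ} (Eab : Fin d₁ → Fin d₂ → Bool) (Eac : Fin d₁ → Fin d₃ → Bool)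
    (Ebc : Fin d₂ → Fin d₃ → Bool) (i : Fin d₁) (j : Fin d₂) (k : Fin d₃) : ℕ :=
  (cond (Eab i j) 1 0) + (cond (Eac i k) 1 0) + (cond (Ebc j k) 1 0)

lemma cycle_not_hyp {V : Type*} (G : SimpleGraph V) (v0 v1 v2 v3 : V)
    (d01 : v0 ≠ v1) (d03 : v0 ≠ v3) (d12 : v1 ≠ v2) (d23 : v2 ≠ v3)
    (e02 : G.Adj v0 v2) (e13 : G.Adj v1 v3)
    (n01 : ¬ G.Adj v0 v1) (n12 : ¬ G.Adj v1 v2) (n23 : ¬ G.Adj v2 v3) (n30 : ¬ G.Adj v3 v0) :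
    ¬ HypStar G 4 := by
  have d02 : v0 ≠ v2 := e02.ne
  have d13 : v1 ≠ v3 := e13.ne
  intro h
  obtain ⟨u, hu⟩ := h ![v0, v1, v2, v3]
    (by
      intro x y hxy
      fin_cases x <;> fin_cases y <;> simp_all <;> rfl)
    (by
      intro i j h1 h2 h3
      have hj : j = i + 2 := by revert h1 h2 h3; revert i j; decide
      subst hj
      fin_cases i
      · exact e02
      · exact e13
      · exact e02.symm
      · exact e13.symm)
  fin_cases u
  · exact n01 hu
  · exact n12 hu
  · exact n23 hu
  · exact n30 hu

section helpers
variable {d₁ d₂ d₃ : ℕ} (Eab : Fin d₁ → Fin d₂ → Bool) (Eac : Fin d₁ → Fin d₃ → Bool)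
    (Ebc : Fin d₂ → Fin d₃ → Bool)

lemma adj_ab (i : Fin d₁) (j : Fin d₂) :
    (lineGraph Eab Eac Ebc).Adj (Sum.inl i) (Sum.inr (Sum.inl j)) ↔ Eab i j = true := by
  simp [lineGraph, SimpleGraph.fromRel_adj]

lemma adj_ba (i : Fin d₁) (j : Fin d₂) :
    (lineGraph Eab Eac Ebc).Adj (Sum.inr (Sum.inl j)) (Sum.inl i) ↔ Eab i j = true := by
  rw [SimpleGraph.adj_comm]; exact adj_ab _ _ _ _ _

lemma adj_ac (i : Fin d₁) (k : Fin d₃) :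
    (lineGraph Eab Eac Ebc).Adj (Sum.inl i) (Sum.inr (Sum.inr k)) ↔ Eac i k = true := by
  simp [lineGraph, SimpleGraph.fromRel_adj]

lemma adj_ca (i : Fin d₁) (k : Fin d₃) :
    (lineGraph Eab Eac Ebc).Adj (Sum.inr (Sum.inr k)) (Sum.inl i) ↔ Eac i k = true := by
  rw [SimpleGraph.adj_comm]; exact adj_ac _ _ _ _ _

lemma adj_bc (j : Fin d₂) (k : Fin d₃) :
    (lineGraph Eab Eac Ebc).Adj (Sum.inr (Sum.inl j)) (Sum.inr (Sum.inr k)) ↔ Ebc j k = true := by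
  simp [lineGraph, SimpleGraph.fromRel_adj]

lemma adj_cb (j : Fin d₂) (k : Fin d₃) :
    (lineGraph Eab Eac Ebc).Adj (Sum.inr (Sum.inr k)) (Sum.inr (Sum.inl j)) ↔ Ebc j k = true := by
  rw [SimpleGraph.adj_comm]; exact adj_bc _ _ _ _ _

lemma adj_aa (i i' : Fin d₁) :
    ¬ (lineGraph Eab Eac Ebc).Adj (Sum.inl i) (Sum.inl i') := by
  simp [lineGraph, SimpleGraph.fromRel_adj]

lemma adj_bb (j j' : Fin d₂) :
    ¬ (lineGraph Eab Eac Ebc).Adj (Sum.inr (Sum.inl j)) (Sum.inr (Sum.inl j')) := by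
  simp [lineGraph, SimpleGraph.fromRel_adj]

lemma adj_cc (k k' : Fin d₃) :
    ¬ (lineGraph Eab Eac Ebc).Adj (Sum.inr (Sum.inr k)) (Sum.inr (Sum.inr k')) := by
  simp [lineGraph, SimpleGraph.fromRel_adj]

/-- abbreviation for the RHS -/
def Config : Prop :=
      ((∃ (a₁ a₂ : Fin d₁) (b₁ : Fin d₂) (c₁ : Fin d₃),
          mu Eab Eac Ebc a₁ b₁ c₁ = 1 ∧ mu Eab Eac Ebc a₂ b₁ c₁ = 1 ∧
          (cond (Eab a₁ b₁) 1 0 : ℕ) = 1 ∧ (cond (Eab a₂ b₁) 1 0 : ℕ) = 0) ∨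
       (∃ (a₁ : Fin d₁) (b₁ : Fin d₂) (c₁ c₂ : Fin d₃),
          mu Eab Eac Ebc a₁ b₁ c₁ = 1 ∧ mu Eab Eac Ebc a₁ b₁ c₂ = 1 ∧
          (cond (Eac a₁ c₁) 1 0 : ℕ) = 1 ∧ (cond (Eac a₁ c₂) 1 0 : ℕ) = 0) ∨
       (∃ (a₁ : Fin d₁) (b₁ b₂ : Fin d₂) (c₁ : Fin d₃),
          mu Eab Eac Ebc a₁ b₁ c₁ = 1 ∧ mu Eab Eac Ebc a₁ b₂ c₁ = 1 ∧
          (cond (Ebc b₁ c₁) 1 0 : ℕ) = 1 ∧ (cond (Ebc b₂ c₁) 1 0 : ℕ) = 0))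

lemma conf1 (a₁ a₂ : Fin d₁) (b : Fin d₂) (c : Fin d₃)
    (h1 : Eab a₁ b = true) (h2 : Eab a₂ b = false)
    (h3 : Eac a₂ c = true) (h4 : Eac a₁ c = false) (h5 : Ebc b c = false) :
    Config Eab Eac Ebc :=
  Or.inl ⟨a₁, a₂, b, c, by simp [mu, h1, h4, h5], by simp [mu, h2, h3, h5],
    by simp [h1], by simp [h2]⟩

lemma conf2 (a : Fin d₁) (b : Fin d₂) (c₁ c₂ : Fin d₃)
    (h1 : Eac a c₁ = true) (h2 : Eac a c₂ = false)
    (h3 : Ebc b c₂ = true) (h4 : Ebc b c₁ = false) (h5 : Eab a b = false) :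
    Config Eab Eac Ebc :=
  Or.inr (Or.inl ⟨a, b, c₁, c₂, by simp [mu, h1, h4, h5], by simp [mu, h2, h3, h5],
    by simp [h1], by simp [h2]⟩)

lemma conf3 (a : Fin d₁) (b₁ b₂ : Fin d₂) (c : Fin d₃)
    (h1 : Ebc b₁ c = true) (h2 : Ebc b₂ c = false)
    (h3 : Eab a b₂ = true) (h4 : Eab a b₁ = false) (h5 : Eac a c = false) :
    Config Eab Eac Ebc :=
  Or.inr (Or.inr ⟨a, b₁, b₂, c, by simp [mu, h1, h4, h5], by simp [mu, h2, h3, h5],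
    by simp [h1], by simp [h2]⟩)

lemma ferrers_elim {α β : Type*} (E : α → β → Bool)
    (hF : ∀ i i' j j', E i j = true → E i' j' = true → E i j' = true ∨ E i' j = true)
    {i i' : α} {j j' : β}
    (h1 : E i j = true) (h2 : E i' j' = true) (h3 : E i j' = false) (h4 : E i' j = false)
    (C : Prop) : C := by
  rcases hF i i' j j' h1 h2 with h | h <;> simp_all

lemma bash {d₁ d₂ d₃ : ℕ} (Eab : Fin d₁ → Fin d₂ → Bool) (Eac : Fin d₁ → Fin d₃ → Bool)
    (Ebc : Fin d₂ → Fin d₃ → Bool)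
    (hab : ∀ i i' j j', Eab i j = true → Eab i' j' = true →
      Eab i j' = true ∨ Eab i' j = true)
    (hac : ∀ i i' k k', Eac i k = true → Eac i' k' = true →
      Eac i k' = true ∨ Eac i' k = true)
    (hbc : ∀ j j' k k', Ebc j k = true → Ebc j' k' = true →
      Ebc j k' = true ∨ Ebc j' k = true)
    (v0 v1 v2 v3 : Fin d₁ ⊕ Fin d₂ ⊕ Fin d₃)
    (e02 : (lineGraph Eab Eac Ebc).Adj v0 v2) (e13 : (lineGraph Eab Eac Ebc).Adj v1 v3)
    (n01 : ¬ (lineGraph Eab Eac Ebc).Adj v0 v1) (n12 : ¬ (lineGraph Eab Eac Ebc).Adj v1 v2)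
    (n23 : ¬ (lineGraph Eab Eac Ebc).Adj v2 v3) (n30 : ¬ (lineGraph Eab Eac Ebc).Adj v3 v0) :
    Config Eab Eac Ebc := by
  rcases v0 with a0 | b0 | c0 <;> rcases v1 with a1 | b1 | c1 <;>
    rcases v2 with a2 | b2 | c2 <;> rcases v3 with a3 | b3 | c3 <;>
    simp only [adj_ab, adj_ba, adj_ac, adj_ca, adj_bc, adj_cb, adj_aa, adj_bb, adj_cc,
      Bool.not_eq_true, not_false_eq_true] at e02 e13 n01 n12 n23 n30 <;>
    first
    | exact e02.elim
    | exact e13.elim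
    | exact ferrers_elim Eab hab e02 e13 n30 n12 _
    | exact ferrers_elim Eab hab e02 e13 n12 n30 _
    | exact ferrers_elim Eab hab e02 e13 n01 n23 _
    | exact ferrers_elim Eab hab e02 e13 n23 n01 _
    | exact ferrers_elim Eac hac e02 e13 n30 n12 _
    | exact ferrers_elim Eac hac e02 e13 n12 n30 _
    | exact ferrers_elim Eac hac e02 e13 n01 n23 _
    | exact ferrers_elim Eac hac e02 e13 n23 n01 _
    | exact ferrers_elim Ebc hbc e02 e13 n30 n12 _
    | exact ferrers_elim Ebc hbc e02 e13 n12 n30 _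
    | exact ferrers_elim Ebc hbc e02 e13 n01 n23 _
    | exact ferrers_elim Ebc hbc e02 e13 n23 n01 _
    | (apply conf1 <;> solve_by_elim)
    | (apply conf2 <;> solve_by_elim)
    | (apply conf3 <;> solve_by_elim)

private lemma extract_bool_true {b : Bool} (h : (cond b 1 0 : ℕ) = 1) : b = true := by
  cases b <;> simp_all

private lemma extract_bool_false {b : Bool} (h : (cond b 1 0 : ℕ) = 0) : b = false := by
  cases b <;> simp_all


/-- under the standing assumption of the section that each of the index
sets `U_h(X)` resembles a Ferrers diagram (expressed here by the "no two incomparable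
lines" conditions `hab`, `hac`, `hbc`), the variety `X` fails the `Hyp₄(⋆)`-property iff
one of the three configurations of multiplicities
`μ_{a₁b₁c₁} = μ_{a₂b₁c₁} = 1, μ_{a₁b₁0} = 1, μ_{a₂b₁0} = 0` (and its two analogues
obtained by permuting the roles of the three directions) occurs. -/
theorem not_hyp4_iff_mu_config {d₁ d₂ d₃ : ℕ}
    (Eab : Fin d₁ → Fin d₂ → Bool) (Eac : Fin d₁ → Fin d₃ → Bool)
    (Ebc : Fin d₂ → Fin d₃ → Bool)
    (hab : ∀ i i' j j', Eab i j = true → Eab i' j' = true →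
      Eab i j' = true ∨ Eab i' j = true)
    (hac : ∀ i i' k k', Eac i k = true → Eac i' k' = true →
      Eac i k' = true ∨ Eac i' k = true)
    (hbc : ∀ j j' k k', Ebc j k = true → Ebc j' k' = true →
      Ebc j k' = true ∨ Ebc j' k = true) :
    ¬ HypStar (lineGraph Eab Eac Ebc) 4 ↔
      ((∃ (a₁ a₂ : Fin d₁) (b₁ : Fin d₂) (c₁ : Fin d₃),
          mu Eab Eac Ebc a₁ b₁ c₁ = 1 ∧ mu Eab Eac Ebc a₂ b₁ c₁ = 1 ∧
          (cond (Eab a₁ b₁) 1 0 : ℕ) = 1 ∧ (cond (Eab a₂ b₁) 1 0 : ℕ) = 0) ∨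
       (∃ (a₁ : Fin d₁) (b₁ : Fin d₂) (c₁ c₂ : Fin d₃),
          mu Eab Eac Ebc a₁ b₁ c₁ = 1 ∧ mu Eab Eac Ebc a₁ b₁ c₂ = 1 ∧
          (cond (Eac a₁ c₁) 1 0 : ℕ) = 1 ∧ (cond (Eac a₁ c₂) 1 0 : ℕ) = 0) ∨
       (∃ (a₁ : Fin d₁) (b₁ b₂ : Fin d₂) (c₁ : Fin d₃),
          mu Eab Eac Ebc a₁ b₁ c₁ = 1 ∧ mu Eab Eac Ebc a₁ b₂ c₁ = 1 ∧
          (cond (Ebc b₁ c₁) 1 0 : ℕ) = 1 ∧ (cond (Ebc b₂ c₁) 1 0 : ℕ) = 0)) := by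
  constructor
  · intro h
    simp only [HypStar, not_forall] at h
    obtain ⟨H, hinj, hdiag, hno⟩ := h
    push_neg at hno
    have e02 := hdiag 0 2 (by decide) (by decide) (by decide)
    have e13 := hdiag 1 3 (by decide) (by decide) (by decide)
    have n01 := hno 0
    have n12 := hno 1
    have n23 := hno 2
    have n30 := hno 3
    rw [show ((0 : ZMod 4) + 1) = 1 from by decide] at n01
    rw [show ((1 : ZMod 4) + 1) = 2 from by decide] at n12
    rw [show ((2 : ZMod 4) + 1) = 3 from by decide] at n23
    rw [show ((3 : ZMod 4) + 1) = 0 from by decide] at n30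
    exact bash Eab Eac Ebc hab hac hbc (H 0) (H 1) (H 2) (H 3) e02 e13 n01 n12 n23 n30
  · rintro (⟨a₁, a₂, b, c, h1, h2, h3, h4⟩ | ⟨a, b, c₁, c₂, h1, h2, h3, h4⟩ |
      ⟨a, b₁, b₂, c, h1, h2, h3, h4⟩)
    · -- config 1
      have hb1 : Eab a₁ b = true := extract_bool_true h3
      have hb2 : Eab a₂ b = false := extract_bool_false h4
      have hrest : Eac a₁ c = false ∧ Ebc b c = false := by
        rcases h : Eac a₁ c <;> rcases h' : Ebc b c <;> simp_all [mu]
      obtain ⟨hc1, hbc1⟩ := hrest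
      have hc2 : Eac a₂ c = true := by
        rcases h : Eac a₂ c <;> simp_all [mu]
      refine cycle_not_hyp _ (Sum.inl a₁) (Sum.inl a₂) (Sum.inr (Sum.inl b))
        (Sum.inr (Sum.inr c)) ?_ (by simp) (by simp) (by simp) ((adj_ab _ _ _ _ _).mpr hb1)
        ((adj_ac _ _ _ _ _).mpr hc2) (adj_aa _ _ _ _ _) ?_ ?_ ?_
      · intro hcon
        rw [Sum.inl.injEq] at hcon
        rw [hcon, hb2] at hb1; exact Bool.false_ne_true hb1
      · rw [adj_ab, hb2]; exact Bool.false_ne_true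
      · rw [adj_bc, hbc1]; exact Bool.false_ne_true
      · rw [adj_ca, hc1]; exact Bool.false_ne_true
    · -- config 2
      have hc1 : Eac a c₁ = true := extract_bool_true h3
      have hc2 : Eac a c₂ = false := extract_bool_false h4
      have hrest : Eab a b = false ∧ Ebc b c₁ = false := by
        rcases h : Eab a b <;> rcases h' : Ebc b c₁ <;> simp_all [mu]
      obtain ⟨hab1, hbc1⟩ := hrest
      have hbc2 : Ebc b c₂ = true := by
        rcases h : Ebc b c₂ <;> simp_all [mu]
      refine cycle_not_hyp _ (Sum.inl a) (Sum.inr (Sum.inl b)) (Sum.inr (Sum.inr c₁))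
        (Sum.inr (Sum.inr c₂)) (by simp) (by simp) (by simp) ?_
        ((adj_ac _ _ _ _ _).mpr hc1) ((adj_bc _ _ _ _ _).mpr hbc2) ?_ ?_
        (adj_cc _ _ _ _ _) ?_
      · intro hcon
        rw [Sum.inr.injEq, Sum.inr.injEq] at hcon
        rw [hcon, hc2] at hc1; exact Bool.false_ne_true hc1
      · rw [adj_ab, hab1]; exact Bool.false_ne_true
      · rw [adj_bc, hbc1]; exact Bool.false_ne_true
      · rw [adj_ca, hc2]; exact Bool.false_ne_true
    · -- config 3
      have hbc1 : Ebc b₁ c = true := extract_bool_true h3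
      have hbc2 : Ebc b₂ c = false := extract_bool_false h4
      have hrest : Eab a b₁ = false ∧ Eac a c = false := by
        rcases h : Eab a b₁ <;> rcases h' : Eac a c <;> simp_all [mu]
      obtain ⟨hab1, hac1⟩ := hrest
      have hab2 : Eab a b₂ = true := by
        rcases h : Eab a b₂ <;> simp_all [mu]
      refine cycle_not_hyp _ (Sum.inl a) (Sum.inr (Sum.inl b₁)) (Sum.inr (Sum.inl b₂))
        (Sum.inr (Sum.inr c)) (by simp) (by simp) ?_ (by simp)
        ((adj_ab _ _ _ _ _).mpr hab2) ((adj_bc _ _ _ _ _).mpr hbc1) ?_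
        (adj_bb _ _ _ _ _) ?_ ?_
      · intro hcon
        rw [Sum.inr.injEq, Sum.inl.injEq] at hcon
        rw [hcon, hab2] at hab1; exact Bool.false_ne_true hab1.symm
      · rw [adj_ab, hab1]; exact Bool.false_ne_true
      · rw [adj_bc, hbc2]; exact Bool.false_ne_true
      · rw [adj_ca, hac1]; exact Bool.false_ne_true
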